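/- arXiv:2110.10025 — 2 statements merged into one kernel-verified Lean document; each statement's English description precedes it below -/
import Mathlib

section
/- Let G be a finite 2-group with cyclic center Z(G) of order 2^m (m ≥ 1) and with G/Z(G) dihedral of order 2^n (n ≥ 2). Then G is isomorphic to exactly one of the groups D_{2^{m|n}}, Q_{2^{m|n}}, or S_{2^{m|n}} given by the presentations: D = ⟨a,b,c | a²=1, b²=1, (ab)^{2^{n−1}} = c^{2^{m−1}}, c^{2^m}=[a,c]=[b,c]=1⟩; Q = ⟨a,b,c | a²=c, b²=c, (ab)^{2^{n−1}} = c^{2^{m−1}+2^{n−1}}, c^{2^m}=[a,c]=[b,c]=1⟩; S = ⟨a,b,c | a²=1, b²=c, (ab)^{2^{n−1}} = c^{2^{m−1}+2^{n−2}}, c^{2^m}=[a,c]=[b,c]=1⟩ (up to the exceptional isomorphisms for n = 2). -/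
section Count
variable {P : Type*} [Group P]

lemma count_surj (m n e1 e2 e3 : ℕ) (hn : 1 ≤ n)
    (α β γ : P)
    (h1 : α^2 = γ^e1) (h2 : β^2 = γ^e2) (h3 : (α*β)^(2^(n-1)) = γ^e3)
    (h4 : γ^(2^m) = 1) (h5 : Commute α γ) (h6 : Commute β γ)
    (hgen : Subgroup.closure {α, β, γ} = ⊤) :
    ∃ F : Fin (2^m) × Fin (2^(n-1)) × Fin 2 → P, Function.Surjective F := by
  have hγαβ : Commute (α*β) γ := h5.mul_left h6
  have hc2 : ∀ k l : ℤ, Commute (γ^k) ((α*β)^l) := fun k l => (hγαβ.symm).zpow_zpow k l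
  have hc1 : ∀ k : ℤ, Commute (γ^k) α := fun k => (h5.symm).zpow_left k
  set e : ℤ := (e1 : ℤ) + e2 with he
  have e12 : γ^e = α^2*β^2 := by
    rw [he, zpow_add, zpow_natCast, zpow_natCast, h1, h2]
  have hconj : α * (α*β) * α⁻¹ = γ^e * (α*β)⁻¹ := by
    rw [e12, pow_two, pow_two]; group
  have hconjz : ∀ t : ℤ, α * (α*β)^t * α⁻¹ = γ^(e*t) * (α*β)^(-t) := by
    intro t
    have h0 := map_zpow (MulAut.conj α) (α*β) t
    simp only [MulAut.conj_apply] at h0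
    have hcinv : Commute (γ^e) (α*β)⁻¹ := ((hγαβ.symm).zpow_left e).inv_right
    rw [h0, hconj, hcinv.mul_zpow, ← zpow_mul, inv_zpow, ← zpow_neg]
  have hswap : ∀ l : ℤ, α * (α*β)^l = γ^(e*l) * (α*β)^(-l) * α := by
    intro l
    have := hconjz l
    calc α * (α*β)^l = (α * (α*β)^l * α⁻¹) * α := by group
    _ = γ^(e*l) * (α*β)^(-l) * α := by rw [this]
  have hαinv : α⁻¹ = γ^(-(e1:ℤ)) * α := by
    rw [zpow_neg, zpow_natCast, ← h1]; group
  have hβ : β = γ^((e2:ℤ)) * (α*β)^(-1:ℤ) * α := by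
    rw [zpow_natCast, ← h2, zpow_neg_one]; group
  -- normal form N k l = γ^k (αβ)^l
  set N : ℤ → ℤ → P := fun k l => γ^k * (α*β)^l with hN
  have nLL : ∀ k l k' l', N k l * N k' l' = N (k+k') (l+l') := by
    intro k l k' l'
    simp only [hN]
    rw [zpow_add, zpow_add]
    exact ((hc2 k' l).symm.mul_mul_mul_comm _ _).symm ▸ rfl
  have nmove : ∀ k l : ℤ, α * N k l = N (k+e*l) (-l) * α := by
    intro k l
    simp only [hN]
    calc α * (γ^k * (α*β)^l) = γ^k * (α * (α*β)^l) := by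
          rw [← mul_assoc, ← (hc1 k).eq, mul_assoc]
    _ = γ^k * (γ^(e*l) * (α*β)^(-l) * α) := by rw [hswap]
    _ = γ^(k+e*l) * (α*β)^(-l) * α := by rw [zpow_add]; group
  have nInv : ∀ k l : ℤ, (N k l)⁻¹ = N (-k) (-l) := by
    intro k l
    simp only [hN]
    rw [mul_inv_rev, ← zpow_neg, ← zpow_neg, ((hc2 (-k) (-l)).eq)]
  have hα : α = N 0 0 * α := by simp [hN]
  have hγmem : γ = N 1 0 := by simp [hN]
  have hβmem : β = N e2 (-1) * α := by
    simp only [hN]; exact hβ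
  let K : Subgroup P :=
    { carrier := {p | (∃ k l : ℤ, p = N k l) ∨ (∃ k l : ℤ, p = N k l * α)}
      one_mem' := Or.inl ⟨0, 0, by simp [hN]⟩
      mul_mem' := by
        rintro p q (⟨k,l,rfl⟩|⟨k,l,rfl⟩) (⟨k',l',rfl⟩|⟨k',l',rfl⟩)
        · exact Or.inl ⟨k+k', l+l', nLL k l k' l'⟩
        · exact Or.inr ⟨k+k', l+l', by rw [← mul_assoc, nLL]⟩
        · refine Or.inr ⟨k+(k'+e*l'), l+(-l'), ?_⟩
          rw [mul_assoc, nmove, ← mul_assoc, nLL, mul_assoc]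
        · refine Or.inl ⟨k+(k'+e*l')+(e1:ℤ), l+(-l'), ?_⟩
          have h7 : N k l * α * (N k' l' * α) = (N k l * (α * N k' l')) * α := by group
          rw [h7, nmove, ← mul_assoc, nLL, mul_assoc, ← pow_two, h1,
            ← zpow_natCast γ e1]
          simp only [hN]
          rw [mul_assoc (γ ^ (k + (k' + e * l'))), ← ((hc2 (e1:ℤ) (l+ -l')).eq),
            ← mul_assoc, ← zpow_add]
      inv_mem' := by
        rintro p (⟨k,l,rfl⟩|⟨k,l,rfl⟩)
        · exact Or.inl ⟨-k, -l, (nInv k l)⟩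
        · refine Or.inr ⟨-(e1:ℤ)+(-k+e*(-l)), l, ?_⟩
          rw [mul_inv_rev, nInv, hαinv]
          have h7 : γ ^ (-(e1:ℤ)) * α * N (-k) (-l) = γ ^ (-(e1:ℤ)) * (α * N (-k) (-l)) := by
            group
          rw [h7, nmove, neg_neg, ← mul_assoc]
          congr 1
          simp only [hN]
          rw [← mul_assoc, ← zpow_add]
      }
  have hKtop : ∀ p : P, p ∈ K := by
    have : Subgroup.closure {α, β, γ} ≤ K := by
      rw [Subgroup.closure_le]
      rintro p (rfl|rfl|rfl)
      · exact Or.inr ⟨0, 0, hα⟩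
      · exact Or.inr ⟨e2, -1, hβmem⟩
      · exact Or.inl ⟨1, 0, hγmem⟩
    intro p; exact this (hgen ▸ Subgroup.mem_top p)
  -- reduction of exponents
  have hMpos : (0:ℤ) < (2^m : ℕ) := by positivity
  have hNpos : (0:ℤ) < (2^(n-1) : ℕ) := by positivity
  have hγZ : γ ^ ((2^m : ℕ) : ℤ) = 1 := by rw [zpow_natCast]; exact h4
  have hαβZ : (α*β) ^ ((2^(n-1) : ℕ) : ℤ) = γ ^ ((e3:ℕ) : ℤ) := by
    rw [zpow_natCast, zpow_natCast]; exact h3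
  have redγ : ∀ k : ℤ, ∃ i : Fin (2^m), γ^k = γ^((i:ℕ):ℤ) := by
    intro k
    have hk := Int.mul_ediv_add_emod k ((2^m : ℕ) : ℤ)
    have h0 : γ^k = γ^(k % ((2^m : ℕ) : ℤ)) := by
      conv_lhs => rw [← hk]
      rw [zpow_add, zpow_mul, hγZ, one_zpow, one_mul]
    have hlt : k % ((2^m : ℕ) : ℤ) < (2^m : ℕ) := Int.emod_lt_of_pos k hMpos
    have hge : 0 ≤ k % ((2^m : ℕ) : ℤ) := Int.emod_nonneg k (by positivity)
    refine ⟨⟨(k % ((2^m : ℕ) : ℤ)).toNat, ?_⟩, ?_⟩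
    · omega
    · rw [h0]; congr 1; simp; omega
  have redαβ : ∀ l : ℤ, ∃ (j : Fin (2^(n-1))) (k' : ℤ),
      (α*β)^l = γ^k' * (α*β)^((j:ℕ):ℤ) := by
    intro l
    have hk := Int.mul_ediv_add_emod l ((2^(n-1) : ℕ) : ℤ)
    have hlt : l % ((2^(n-1) : ℕ) : ℤ) < (2^(n-1) : ℕ) := Int.emod_lt_of_pos l hNpos
    have hge : 0 ≤ l % ((2^(n-1) : ℕ) : ℤ) := Int.emod_nonneg l (by positivity)
    refine ⟨⟨(l % ((2^(n-1) : ℕ) : ℤ)).toNat, by omega⟩, ((e3:ℕ):ℤ) * (l / ((2^(n-1) : ℕ) : ℤ)), ?_⟩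
    have h0 : (α*β)^l = (α*β)^(((2^(n-1) : ℕ) : ℤ) * (l / ((2^(n-1) : ℕ) : ℤ))) *
        (α*β)^(l % ((2^(n-1) : ℕ) : ℤ)) := by
      rw [← zpow_add]
      congr 1
      omega
    rw [h0, zpow_mul, hαβZ, ← zpow_mul]
    congr 2
    simp; omega
  refine ⟨fun t => γ^((t.1 : ℕ)) * (α*β)^((t.2.1 : ℕ)) * α^((t.2.2 : ℕ)), ?_⟩
  intro p
  have key : ∀ k l : ℤ, ∃ (i : Fin (2^m)) (j : Fin (2^(n-1))),
      N k l = γ^((i:ℕ)) * (α*β)^((j:ℕ)) := by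
    intro k l
    obtain ⟨j, k', hj⟩ := redαβ l
    obtain ⟨i, hi⟩ := redγ (k + k')
    refine ⟨i, j, ?_⟩
    simp only [hN]
    rw [hj, ← mul_assoc, ← zpow_add, hi, zpow_natCast, zpow_natCast]
  rcases hKtop p with (⟨k,l,rfl⟩|⟨k,l,rfl⟩)
  · obtain ⟨i, j, hij⟩ := key k l
    exact ⟨(i, j, 0), by simp [hij]⟩
  · obtain ⟨i, j, hij⟩ := key k l
    exact ⟨(i, j, 1), by simp [hij]⟩

lemma iso_of_surj_card_le {G P : Type*} [Group G] [Group P] [Finite G] [Finite P]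
    (f : P →* G) (hf : Function.Surjective f) (hle : Nat.card P ≤ Nat.card G) :
    Nonempty (G ≃* P) := by
  have h2 : Nat.card G ≤ Nat.card P := Nat.card_le_card_of_surjective f hf
  have hcards : Nat.card P = Nat.card G := le_antisymm hle h2
  have hbij : Function.Bijective f := by
    cases nonempty_fintype P; cases nonempty_fintype G
    rw [Fintype.bijective_iff_surjective_and_card]
    refine ⟨hf, ?_⟩
    rw [← Nat.card_eq_fintype_card, ← Nat.card_eq_fintype_card, hcards]
  exact ⟨(MulEquiv.ofBijective f hbij).symm⟩

lemma rel_one {α : Type*} {rels : Set (FreeGroup α)} {r : FreeGroup α} (hr : r ∈ rels) :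
    PresentedGroup.mk rels r = 1 :=
  (QuotientGroup.eq_one_iff r).mpr (Subgroup.subset_normalClosure hr)

lemma pg_closure_top (rels : Set (FreeGroup (Fin 3))) :
    Subgroup.closure {(PresentedGroup.of 0 : PresentedGroup rels),
      PresentedGroup.of 1, PresentedGroup.of 2} = ⊤ := by
  have h : Set.range (PresentedGroup.of : Fin 3 → PresentedGroup rels) =
      {PresentedGroup.of 0, PresentedGroup.of 1, PresentedGroup.of 2} := by
    ext p
    constructor
    · rintro ⟨i, rfl⟩
      fin_cases i <;> simp [Set.mem_insert_iff]
    · rintro (rfl|rfl|rfl) <;> exact ⟨_, rfl⟩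
  rw [← h, PresentedGroup.closure_range_of]

lemma build_iso {G : Type*} [Group G] [Finite G] (m n e1 e2 e3 : ℕ) (hn : 1 ≤ n)
    (rels : Set (FreeGroup (Fin 3)))
    (A B C : G)
    (hcard : Nat.card G = 2^(m+n))
    (hgen : Subgroup.closure {A,B,C} = ⊤)
    (hlift : ∀ r ∈ rels, FreeGroup.lift (fun i => ![A,B,C] i) r = 1)
    (p1 : (PresentedGroup.of 0 : PresentedGroup rels)^2 = (PresentedGroup.of 2)^e1)
    (p2 : (PresentedGroup.of 1 : PresentedGroup rels)^2 = (PresentedGroup.of 2)^e2)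
    (p3 : ((PresentedGroup.of 0 : PresentedGroup rels) * PresentedGroup.of 1)^(2^(n-1))
        = (PresentedGroup.of 2)^e3)
    (p4 : ((PresentedGroup.of 2 : PresentedGroup rels))^(2^m) = 1)
    (p5 : Commute (PresentedGroup.of 0 : PresentedGroup rels) (PresentedGroup.of 2))
    (p6 : Commute (PresentedGroup.of 1 : PresentedGroup rels) (PresentedGroup.of 2)) :
    Nonempty (G ≃* PresentedGroup rels) := by
  obtain ⟨F, hF⟩ := count_surj m n e1 e2 e3 hn _ _ _ p1 p2 p3 p4 p5 p6 (pg_closure_top rels)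
  have : Finite (PresentedGroup rels) := Finite.of_surjective F hF
  have hle : Nat.card (PresentedGroup rels) ≤ 2^(m+n) := by
    have h1 := Nat.card_le_card_of_surjective F hF
    have h2 : Nat.card (Fin (2^m) × Fin (2^(n-1)) × Fin 2) = 2^(m+n) := by
      simp [Nat.card_eq_fintype_card]
      rw [mul_comm (2^(n-1)) 2, ← pow_succ']
      rw [← pow_add]
      congr 1
      omega
    omega
  set f : PresentedGroup rels →* G := PresentedGroup.toGroup hlift with hf
  have hfA : f (PresentedGroup.of 0) = A := by rw [hf, PresentedGroup.toGroup.of]; rfl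
  have hfB : f (PresentedGroup.of 1) = B := by rw [hf, PresentedGroup.toGroup.of]; rfl
  have hfC : f (PresentedGroup.of 2) = C := by rw [hf, PresentedGroup.toGroup.of]; rfl
  have hsurj : Function.Surjective f := by
    rw [← MonoidHom.range_eq_top]
    rw [← top_le_iff, ← hgen, Subgroup.closure_le]
    rintro p (rfl|rfl|rfl)
    · exact ⟨PresentedGroup.of 0, hfA⟩
    · exact ⟨PresentedGroup.of 1, hfB⟩
    · exact ⟨PresentedGroup.of 2, hfC⟩
  exact iso_of_surj_card_le f hsurj (by omega)

lemma rotation_order {Q : Type*} [Group Q] [Finite Q] (n : ℕ) (hn : 2 ≤ n)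
    (hq : Nat.card Q = 2^n) (x y : Q) (hx : orderOf x = 2) (hy : orderOf y = 2)
    (hgen : Subgroup.closure {x,y} = ⊤) : orderOf (x*y) = 2^(n-1) := by
  have hdvd : orderOf (x*y) ∣ 2^n := by rw [← hq]; exact orderOf_dvd_natCard _
  obtain ⟨k, hk, hord⟩ := (Nat.dvd_prime_pow Nat.prime_two).mp hdvd
  have hx2 : x^2 = 1 := by rw [← hx]; exact pow_orderOf_eq_one x
  have hy2 : y^2 = 1 := by rw [← hy]; exact pow_orderOf_eq_one y
  have hgen' : Subgroup.closure {x, y, (1:Q)} = ⊤ := by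
    refine le_antisymm le_top ?_
    rw [← hgen]
    exact Subgroup.closure_mono (by intro p hp; simp only [Set.mem_insert_iff,
      Set.mem_singleton_iff] at hp ⊢; tauto)
  obtain ⟨F, hF⟩ := count_surj 0 (k+1) 0 0 0 (by omega) x y 1
    (by simpa using hx2) (by simpa using hy2)
    (by simp only [Nat.add_sub_cancel, pow_zero]; rw [← hord]; exact pow_orderOf_eq_one _)
    (by simp) (Commute.one_right x) (Commute.one_right y) hgen'
  have hcard_le : Nat.card Q ≤ 2^0 * (2^k * 2) := by
    have h1 := Nat.card_le_card_of_surjective F hF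
    simpa [Nat.card_eq_fintype_card] using h1
  have hnk : n ≤ k + 1 := by
    have h2 : (2:ℕ)^n ≤ 2^(k+1) := by
      rw [pow_succ]
      calc (2:ℕ)^n = Nat.card Q := hq.symm
      _ ≤ 2^0 * (2^k * 2) := hcard_le
      _ = 2^k * 2 := by ring
    exact (Nat.pow_le_pow_iff_right (by norm_num)).mp h2
  have hkn : k ≠ n := by
    rintro rfl
    have hztop : Subgroup.zpowers (x*y) = ⊤ :=
      Subgroup.eq_top_of_card_eq _ (by rw [Nat.card_zpowers, hord, hq])
    have hxmem : x ∈ Subgroup.zpowers (x*y) := hztop ▸ Subgroup.mem_top x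
    have hymem : y ∈ Subgroup.zpowers (x*y) := hztop ▸ Subgroup.mem_top y
    obtain ⟨k1, hk1⟩ := Subgroup.mem_zpowers_iff.mp hxmem
    obtain ⟨k2, hk2⟩ := Subgroup.mem_zpowers_iff.mp hymem
    have hcomm : Commute x y := by
      have hzz := Commute.zpow_zpow_self (x*y) k1 k2
      rwa [hk1, hk2] at hzz
    have h3 : (x*y)^2 = 1 := by rw [hcomm.mul_pow, hx2, hy2, one_mul]
    have h4 : orderOf (x*y) ∣ 2 := orderOf_dvd_of_pow_eq_one h3
    rw [hord] at h4
    have h5 : (2:ℕ)^k ≤ 2 := Nat.le_of_dvd (by norm_num) h4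
    have h6 : (4:ℕ) ≤ 2^k := by
      calc (4:ℕ) = 2^2 := by norm_num
      _ ≤ 2^k := Nat.pow_le_pow_right (by norm_num) hn
    omega
  have : k = n - 1 := by omega
  rw [hord, this]

lemma gen_top {G : Type*} [Group G] (x y : G ⧸ Subgroup.center G)
    (hxy : Subgroup.closure {x,y} = ⊤) (CC : G)
    (hCCgen : ∀ v ∈ Subgroup.center G, ∃ k : ℤ, v = CC^k)
    (A B : G) (hA : QuotientGroup.mk' (Subgroup.center G) A = x)
    (hB : QuotientGroup.mk' (Subgroup.center G) B = y) :
    Subgroup.closure {A, B, CC} = ⊤ := by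
  set π := QuotientGroup.mk' (Subgroup.center G) with hπ
  set K := Subgroup.closure {A, B, CC} with hK
  have hZK : Subgroup.center G ≤ K := by
    intro v hv
    obtain ⟨k, rfl⟩ := hCCgen v hv
    exact Subgroup.zpow_mem K (Subgroup.subset_closure (by simp)) k
  have hmap : Subgroup.map π K = ⊤ := by
    rw [← top_le_iff, ← hxy, Subgroup.closure_le]
    rintro p (rfl|rfl)
    · exact ⟨A, Subgroup.subset_closure (by simp), hA⟩
    · exact ⟨B, Subgroup.subset_closure (by simp), hB⟩
  have hcm := Subgroup.comap_map_eq π K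
  rw [hmap, Subgroup.comap_top, QuotientGroup.ker_mk', sup_eq_left.mpr hZK] at hcm
  exact hcm.symm

lemma central_of_commutes {G : Type*} [Group G] (x y : G ⧸ Subgroup.center G)
    (hxy : Subgroup.closure {x,y} = ⊤) (CC : G) (hCCmem : CC ∈ Subgroup.center G)
    (hCCgen : ∀ v ∈ Subgroup.center G, ∃ k : ℤ, v = CC^k)
    (A B : G) (hA : QuotientGroup.mk' (Subgroup.center G) A = x)
    (hB : QuotientGroup.mk' (Subgroup.center G) B = y) (s : G)
    (hsA : A*s = s*A) (hsB : B*s = s*B) : s ∈ Subgroup.center G := by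
  have htop := gen_top x y hxy CC hCCgen A B hA hB
  have hle : Subgroup.closure {A, B, CC} ≤ Subgroup.centralizer {s} := by
    rw [Subgroup.closure_le]
    rintro p (rfl|rfl|rfl) <;> rw [SetLike.mem_coe, Subgroup.mem_centralizer_iff] <;>
      intro w hw <;> simp only [Set.mem_singleton_iff] at hw <;> rw [hw]
    · exact hsA.symm
    · exact hsB.symm
    · exact Subgroup.mem_center_iff.mp hCCmem s
  rw [Subgroup.mem_center_iff]
  intro g
  have hg : g ∈ Subgroup.centralizer {s} := hle (htop ▸ Subgroup.mem_top g)
  exact (Subgroup.mem_centralizer_iff.mp hg s rfl).symm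

lemma unique_involution {G : Type*} [Group G] [Finite G] (m : ℕ) (hm : 1 ≤ m) (CC v : G)
    (hord : orderOf CC = 2^m) (hpow : ∃ k : ℤ, v = CC^k) (hv2 : v^2 = 1) (hv1 : v ≠ 1) :
    v = CC^(2^(m-1)) := by
  obtain ⟨k, rfl⟩ := hpow
  have h1 : CC^(k*2) = 1 := by
    rw [← hv2, ← zpow_natCast (CC^k) 2, ← zpow_mul]
    norm_num
  have h2 : ((2^m : ℕ) : ℤ) ∣ k*2 := by
    rw [← hord]
    exact orderOf_dvd_iff_zpow_eq_one.mpr h1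
  have hsplit : (2:ℤ)^m = 2^(m-1) * 2 := by
    rw [← pow_succ]
    congr 1
    omega
  have h3 : ((2:ℤ)^(m-1)) ∣ k := by
    obtain ⟨c, hc⟩ := h2
    push_cast at hc
    rw [hsplit] at hc
    refine ⟨c, ?_⟩
    have h4 : k * 2 = (2^(m-1)*c) * 2 := by rw [hc]; ring
    exact mul_right_cancel₀ (by norm_num) h4
  obtain ⟨j, hj⟩ := h3
  set ι : G := CC^((2:ℕ)^(m-1)) with hι
  have hι2 : ι^2 = 1 := by
    rw [hι, ← pow_mul, ← pow_succ]
    have hms : m - 1 + 1 = m := by omega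
    rw [hms, ← hord]
    exact pow_orderOf_eq_one CC
  have hval : CC^k = ι^j := by
    rw [hj, show ((2:ℤ)^(m-1)) = (((2:ℕ)^(m-1) : ℕ) : ℤ) by push_cast; ring,
      zpow_mul, zpow_natCast, ← hι]
  have hι2' : ι^(2:ℤ) = 1 := by
    rw [show (2:ℤ) = ((2:ℕ):ℤ) by norm_num, zpow_natCast, hι2]
  rcases Int.even_or_odd j with ⟨c, hc⟩ | ⟨c, hc⟩
  · exfalso
    apply hv1
    rw [hval, hc, ← two_mul, zpow_mul, hι2', one_zpow]
  · rw [hval, hc, zpow_add, zpow_one, zpow_mul, hι2', one_zpow, one_mul, hι]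

lemma case_core {G : Type*} [Group G] [Finite G] (m n : ℕ) (hm : 1 ≤ m) (hn : 2 ≤ n)
    (hq : Nat.card (G ⧸ Subgroup.center G) = 2^n)
    (x y : G ⧸ Subgroup.center G) (hx : orderOf x = 2) (hy : orderOf y = 2)
    (hxy : Subgroup.closure {x,y} = ⊤)
    (CC : G) (hCCmem : CC ∈ Subgroup.center G) (hCCord : orderOf CC = 2^m)
    (hCCgen : ∀ v ∈ Subgroup.center G, ∃ k : ℤ, v = CC^k)
    (A B : G) (hA : QuotientGroup.mk' (Subgroup.center G) A = x)
    (hB : QuotientGroup.mk' (Subgroup.center G) B = y)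
    (e1 e2 : ℕ) (h1 : A^2 = CC^e1) (h2 : B^2 = CC^e2) :
    (A*B)^(2^(n-1)) = CC^(2^(m-1) + (e1+e2) * 2^(n-2)) := by
  set π := QuotientGroup.mk' (Subgroup.center G) with hπ
  have hrot : orderOf (x*y) = 2^(n-1) := rotation_order n hn hq x y hx hy hxy
  have hcomm_mem : ∀ w ∈ Subgroup.center G, ∀ g : G, Commute g w :=
    fun w hw g => Subgroup.mem_center_iff.mp hw g
  have hCCcomm : ∀ g : G, Commute g CC := hcomm_mem CC hCCmem
  -- basic identities
  have hBA1 : A*(A*B)*A⁻¹ = B*A := by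
    have h := ((hCCcomm B).pow_right e1).eq
    rw [← h1] at h
    calc A*(A*B)*A⁻¹ = A^2*B*A⁻¹ := by rw [pow_two]; group
    _ = B*A^2*A⁻¹ := by rw [← h]
    _ = B*A := by group
  have hBAeq : B*A = (A*B)⁻¹ * CC^(e1+e2) := by
    have h := ((hCCcomm A).pow_right e2).eq
    rw [← h2] at h
    calc B*A = B⁻¹*(B^2*A) := by group
    _ = B⁻¹*(A*B^2) := by rw [← h]
    _ = (A*B)⁻¹*(A^2*B^2) := by group
    _ = (A*B)⁻¹*CC^(e1+e2) := by rw [h1, h2, ← pow_add]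
  have hBApow : ∀ N : ℕ, (B*A)^N = ((A*B)^N)⁻¹ * CC^((e1+e2)*N) := by
    intro N
    have hc : Commute ((A*B)⁻¹) (CC^(e1+e2)) := (hCCcomm _).pow_right _
    rw [hBAeq, hc.mul_pow, inv_pow, ← pow_mul]
  have hconjpow : ∀ N : ℕ, A*(A*B)^N*A⁻¹ = (B*A)^N := by
    intro N
    have h0 := map_pow (MulAut.conj A) (A*B) N
    simp only [MulAut.conj_apply] at h0
    rw [h0, hBA1]
  -- t
  have hxyord : (x*y)^(2^(n-1)) = 1 := by rw [← hrot]; exact pow_orderOf_eq_one _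
  set t : G := (A*B)^(2^(n-1)) with ht
  have htmem : t ∈ Subgroup.center G := by
    have hπt : π t = 1 := by
      rw [ht, map_pow, map_mul, hA, hB, hxyord]
    rwa [← QuotientGroup.ker_mk' (Subgroup.center G), MonoidHom.mem_ker]
  have htcomm : ∀ g : G, Commute g t := hcomm_mem t htmem
  have htsq : t^2 = CC^((e1+e2) * 2^(n-1)) := by
    have h5 : A*t*A⁻¹ = t := by
      rw [(htcomm A).eq]; group
    have h6 : t = t⁻¹ * CC^((e1+e2)*2^(n-1)) := by
      conv_lhs => rw [← h5]
      rw [ht, hconjpow, hBApow]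
    calc t^2 = t*t := sq t
    _ = t*(t⁻¹ * CC^((e1+e2)*2^(n-1))) := by rw [← h6]
    _ = CC^((e1+e2)*2^(n-1)) := by group
  -- v
  set q : ℕ := (e1+e2) * 2^(n-2) with hqdef
  have hq2 : q * 2 = (e1+e2) * 2^(n-1) := by
    rw [hqdef, mul_assoc, ← pow_succ]
    congr 2
    omega
  set v : G := t * (CC^q)⁻¹ with hv
  have hvmem : v ∈ Subgroup.center G :=
    (Subgroup.center G).mul_mem htmem ((Subgroup.center G).inv_mem
      (pow_mem hCCmem q))
  have hvsq : v^2 = 1 := by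
    have hc : Commute t ((CC^q)⁻¹) := ((hCCcomm t).pow_right q).inv_right
    rw [hv, hc.mul_pow, htsq, ← hq2, inv_pow, ← pow_mul, mul_inv_cancel]
  by_cases hveq : v = 1
  · -- bad case : contradiction
    exfalso
    have htq : t = CC^q := by
      rw [hv] at hveq
      exact (mul_inv_eq_one.mp hveq)
    set M : ℕ := 2^(n-2) with hM
    have hM2 : M * 2 = 2^(n-1) := by
      rw [hM, ← pow_succ]
      congr 1
      omega
    have hππ : ∀ s : G, s ∈ Subgroup.center G → π s = 1 := by
      intro s hs
      rwa [← QuotientGroup.ker_mk' (Subgroup.center G), MonoidHom.mem_ker] at hs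
    have hxyM : (x*y)^M ≠ 1 := by
      intro hone
      have hd : orderOf (x*y) ∣ M := orderOf_dvd_of_pow_eq_one hone
      rw [hrot, hM] at hd
      have := Nat.le_of_dvd (by positivity) hd
      have h8 : (2:ℕ)^(n-2) < 2^(n-1) := Nat.pow_lt_pow_right (by norm_num) (by omega)
      omega
    rcases Nat.even_or_odd q with ⟨c, hc⟩ | hodd
    · -- q even : s = (A*B)^M * u with u = (CC^c)⁻¹
      set u : G := (CC^c)⁻¹ with hu
      have humem : u ∈ Subgroup.center G :=
        (Subgroup.center G).inv_mem (pow_mem hCCmem c)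
      have hucomm : ∀ g : G, Commute g u := hcomm_mem u humem
      have hu2 : CC^q * u^2 = 1 := by
        rw [hu, inv_pow, ← pow_mul, show c*2 = q from by omega, mul_inv_cancel]
      set s : G := (A*B)^M * u with hs
      have hsinv : CC^q * u = u⁻¹ := by
        calc CC^q * u = CC^q * u^2 * u⁻¹ := by group
        _ = u⁻¹ := by rw [hu2, one_mul]
      have hssq : s^2 = 1 := by
        rw [hs, (hucomm ((A*B)^M)).mul_pow, ← pow_mul, hM2, ← ht, htq]
        exact hu2
      have hss : s⁻¹ = s := by
        refine inv_eq_of_mul_eq_one_right ?_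
        rw [← pow_two]; exact hssq
      have hsinv2 : s⁻¹ = ((A*B)^M)⁻¹ * u⁻¹ := by
        rw [hs, mul_inv_rev, ((hucomm ((A*B)^M)).inv_inv).symm.eq]
      have hqM : (e1+e2)*M = q := by rw [hM, hqdef]
      have h8 : (B*A)^M * u = s := by
        calc (B*A)^M * u = ((A*B)^M)⁻¹ * CC^((e1+e2)*M) * u := by rw [hBApow]
        _ = ((A*B)^M)⁻¹ * (CC^q * u) := by rw [hqM, mul_assoc]
        _ = ((A*B)^M)⁻¹ * u⁻¹ := by rw [hsinv]
        _ = s⁻¹ := hsinv2.symm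
        _ = s := hss
      have hsA : A*s = s*A := by
        have h7 : A*s*A⁻¹ = (B*A)^M * u := by
          rw [hs]
          calc A*((A*B)^M*u)*A⁻¹ = A*(A*B)^M*(u*A⁻¹) := by group
          _ = A*(A*B)^M*(A⁻¹*u) := by rw [← (hucomm A⁻¹).eq]
          _ = (A*(A*B)^M*A⁻¹)*u := by group
          _ = (B*A)^M * u := by rw [hconjpow]
        calc A*s = (A*s*A⁻¹)*A := by group
        _ = s*A := by rw [h7, h8]
      have hsB : B*s = s*B := by
        have hBAB : B*(A*B)*B⁻¹ = B*A := by group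
        have hconjpowB : B*(A*B)^M*B⁻¹ = (B*A)^M := by
          have h0 := map_pow (MulAut.conj B) (A*B) M
          simp only [MulAut.conj_apply] at h0
          rw [h0, hBAB]
        have h7 : B*s*B⁻¹ = (B*A)^M * u := by
          rw [hs]
          calc B*((A*B)^M*u)*B⁻¹ = B*(A*B)^M*(u*B⁻¹) := by group
          _ = B*(A*B)^M*(B⁻¹*u) := by rw [← (hucomm B⁻¹).eq]
          _ = (B*(A*B)^M*B⁻¹)*u := by group
          _ = (B*A)^M * u := by rw [hconjpowB]
        calc B*s = (B*s*B⁻¹)*B := by group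
        _ = s*B := by rw [h7, h8]
      have hsmem := central_of_commutes x y hxy CC hCCmem hCCgen A B hA hB s hsA hsB
      have hπs : π s = 1 := hππ s hsmem
      rw [hs, map_mul, map_pow, map_mul, hA, hB, hππ u humem, mul_one] at hπs
      exact hxyM hπs
    · -- q odd forces n = 2 and abelian-type contradiction
      have hneq2 : n = 2 := by
        by_contra hne
        have h3 : 3 ≤ n := by omega
        have : (2:ℕ) ∣ q := by
          rw [hqdef]
          exact Dvd.dvd.mul_left (dvd_pow_self 2 (by omega : n-2 ≠ 0)) _
        rw [← Nat.not_even_iff_odd] at hodd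
        exact hodd ((even_iff_two_dvd).mpr this)
      have hq0 : (2:ℕ)^(n-2) = 1 := by rw [hneq2]; norm_num
      have hexp : (2:ℕ)^(n-1) = 2 := by rw [hneq2]; norm_num
      have hAB2 : (A*B)^(2^(n-1)) = A^2*B^2 := by
        rw [← ht, htq, hqdef, hM, hq0, mul_one, pow_add, h1, h2]
      rw [hexp] at hAB2
      have hABcomm : B*A = A*B := by
        have h9 : A*((B*A)*B) = A*((A*B)*B) := by
          calc A*((B*A)*B) = (A*B)^2 := by rw [pow_two]; group
          _ = A^2*B^2 := hAB2
          _ = A*((A*B)*B) := by rw [pow_two, pow_two]; group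
        exact mul_right_cancel (mul_left_cancel h9)
      have hsA : A*(A*B) = (A*B)*A := by
        conv_rhs => rw [mul_assoc, hABcomm]
      have hsB : B*(A*B) = (A*B)*B := by
        rw [← mul_assoc, hABcomm]
      have hsmem := central_of_commutes x y hxy CC hCCmem hCCgen A B hA hB (A*B) hsA hsB
      have hone : x*y = 1 := by
        rw [← hA, ← hB, ← map_mul]
        exact hππ _ hsmem
      rw [hone, orderOf_one, hexp] at hrot
      omega
  · -- good case
    have hvCC : v = CC^(2^(m-1)) := by
      refine unique_involution m hm CC v hCCord (hCCgen v hvmem) hvsq hveq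
    have : t = CC^(2^(m-1)) * CC^q := by
      rw [← hvCC, hv]
      group
    rw [pow_add]
    exact this

lemma odd_pow_zpowers {G : Type*} [Group G] (m : ℕ) (C0 : G) (hord : orderOf C0 = 2^m)
    (k : ℤ) (hk : Odd k) : Subgroup.zpowers (C0^k) = Subgroup.zpowers C0 := by
  apply le_antisymm
  · rw [Subgroup.zpowers_le]
    exact Subgroup.mem_zpowers_iff.mpr ⟨k, rfl⟩
  · rw [Subgroup.zpowers_le]
    have hcop : IsCoprime k ((2:ℤ)^m) := by
      rw [Int.isCoprime_iff_gcd_eq_one]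
      have h1 : Odd k.natAbs := Int.natAbs_odd.mpr hk
      have h2 : Nat.Coprime k.natAbs (2^m) :=
        Nat.Coprime.pow_right m (Nat.coprime_two_right.mpr h1)
      simpa [Int.gcd, Int.natAbs_pow] using h2
    obtain ⟨a', b', hab⟩ := hcop
    refine Subgroup.mem_zpowers_iff.mpr ⟨a', ?_⟩
    have h2m : C0^((2:ℤ)^m) = 1 := by
      refine orderOf_dvd_iff_zpow_eq_one.mp ?_
      rw [hord]
      push_cast
      exact dvd_rfl
    have hab' : k*a' + (2:ℤ)^m*b' = 1 := by linear_combination hab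
    calc (C0^k)^a' = C0^(k*a') := (zpow_mul C0 k a').symm
    _ = C0^(k*a') * (C0^((2:ℤ)^m))^b' := by rw [h2m, one_zpow, mul_one]
    _ = C0^(k*a' + (2:ℤ)^m*b') := by rw [zpow_add]; congr 1; rw [zpow_mul]
    _ = C0 := by rw [hab', zpow_one]

lemma odd_gen_package {G : Type*} [Group G] (m : ℕ) (C0 : G)
    (hmem : C0 ∈ Subgroup.center G) (hord : orderOf C0 = 2^m)
    (hgen : ∀ v ∈ Subgroup.center G, ∃ k : ℤ, v = C0^k)
    (k : ℤ) (hk : Odd k) :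
    (C0^k ∈ Subgroup.center G) ∧ orderOf (C0^k) = 2^m ∧
      (∀ v ∈ Subgroup.center G, ∃ j : ℤ, v = (C0^k)^j) := by
  have hzp := odd_pow_zpowers m C0 hord k hk
  refine ⟨Subgroup.zpow_mem _ hmem k, ?_, ?_⟩
  · have h1 : Nat.card (Subgroup.zpowers (C0^k)) = Nat.card (Subgroup.zpowers C0) := by
      rw [hzp]
    rw [Nat.card_zpowers, Nat.card_zpowers] at h1
    rw [h1, hord]
  · intro v hv
    obtain ⟨t, ht⟩ := hgen v hv
    have hmemv : v ∈ Subgroup.zpowers (C0^k) := by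
      rw [hzp]
      exact Subgroup.mem_zpowers_iff.mpr ⟨t, ht.symm⟩
    obtain ⟨j, hj⟩ := Subgroup.mem_zpowers_iff.mp hmemv
    exact ⟨j, hj.symm⟩

lemma parity_transfer {G : Type*} [Group G] (m : ℕ) (hm : 1 ≤ m) (C0 : G)
    (hord : orderOf C0 = 2^m) (k j l : ℤ) (hk : Odd k) (h : (C0^k)^j = C0^l) :
    (Odd j ↔ Odd l) := by
  rw [← zpow_mul] at h
  have h1 : C0^(k*j - l) = 1 := by rw [zpow_sub, h, mul_inv_cancel]
  have h2 : ((2^m:ℕ):ℤ) ∣ (k*j - l) := by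
    rw [← hord]
    exact orderOf_dvd_iff_zpow_eq_one.mpr h1
  have h3 : (2:ℤ) ∣ (k*j - l) := by
    refine dvd_trans ⟨2^(m-1), ?_⟩ h2
    push_cast
    rw [← pow_succ']
    congr 1
    omega
  have h4 : Even (k*j - l) := even_iff_two_dvd.mpr h3
  rw [Int.even_sub] at h4
  have h5 : Odd (k*j) ↔ Odd j := by
    rw [Int.odd_mul]
    exact and_iff_right hk
  rw [← h5, ← Int.not_even_iff_odd, ← Int.not_even_iff_odd, h4]

lemma adjust_sq {G : Type*} [Group G] (W CC : G) (hCC : CC ∈ Subgroup.center G) (kk : ℤ) :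
    (W * (CC^kk)⁻¹)^2 = W^2 * (CC^(2*kk))⁻¹ := by
  have hc0 : Commute W CC := Subgroup.mem_center_iff.mp hCC W
  have hc : Commute W ((CC^kk)⁻¹) := (hc0.zpow_right kk).inv_right
  rw [hc.mul_pow]
  congr 1
  rw [inv_pow, ← zpow_natCast (CC^kk) 2, ← zpow_mul]
  congr 1
  push_cast
  ring


end Count

namespace MIP

open scoped commutatorElement

def a : FreeGroup (Fin 3) := FreeGroup.of 0
def b : FreeGroup (Fin 3) := FreeGroup.of 1
def c : FreeGroup (Fin 3) := FreeGroup.of 2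

/-- Relations of `D_{2^{m|n}}`. -/
def relsD (m n : ℕ) : Set (FreeGroup (Fin 3)) :=
  {a ^ 2, b ^ 2, (a * b) ^ (2 ^ (n - 1)) * (c ^ (2 ^ (m - 1)))⁻¹,
    c ^ (2 ^ m), ⁅a, c⁆, ⁅b, c⁆}

/-- Relations of `Q_{2^{m|n}}`. -/
def relsQ (m n : ℕ) : Set (FreeGroup (Fin 3)) :=
  {a ^ 2 * c⁻¹, b ^ 2 * c⁻¹, (a * b) ^ (2 ^ (n - 1)) * (c ^ (2 ^ (m - 1) + 2 ^ (n - 1)))⁻¹,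
    c ^ (2 ^ m), ⁅a, c⁆, ⁅b, c⁆}

/-- Relations of `S_{2^{m|n}}`. -/
def relsS (m n : ℕ) : Set (FreeGroup (Fin 3)) :=
  {a ^ 2, b ^ 2 * c⁻¹, (a * b) ^ (2 ^ (n - 1)) * (c ^ (2 ^ (m - 1) + 2 ^ (n - 2)))⁻¹,
    c ^ (2 ^ m), ⁅a, c⁆, ⁅b, c⁆}

lemma glueD {G : Type*} [Group G] [Finite G] (m n : ℕ) (hn : 1 ≤ n) (A B C : G)
    (hcard : Nat.card G = 2^(m+n)) (hgen : Subgroup.closure {A,B,C} = ⊤)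
    (r1 : A^2 = 1) (r2 : B^2 = 1) (r3 : (A*B)^(2^(n-1)) = C^(2^(m-1)))
    (r4 : C^(2^m) = 1) (r5 : A*C=C*A) (r6 : B*C=C*B) :
    Nonempty (G ≃* PresentedGroup (relsD m n)) := by
  have hlift : ∀ r ∈ relsD m n, FreeGroup.lift (fun i => ![A,B,C] i) r = 1 := by
    intro r hr
    simp only [relsD, Set.mem_insert_iff, Set.mem_singleton_iff] at hr
    rcases hr with rfl|rfl|rfl|rfl|rfl|rfl <;>
      simp only [a, b, c, map_pow, map_mul, map_inv, map_commutatorElement,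
        FreeGroup.lift_apply_of, Matrix.cons_val_zero, Matrix.cons_val_one, Matrix.head_cons,
        Matrix.cons_val_two, Matrix.tail_cons]
    · exact r1
    · exact r2
    · rw [r3, mul_inv_cancel]
    · exact r4
    · exact commutatorElement_eq_one_iff_commute.mpr r5
    · exact commutatorElement_eq_one_iff_commute.mpr r6
  have q1 := rel_one (show a^2 ∈ relsD m n from Or.inl rfl)
  have q2 := rel_one (show b^2 ∈ relsD m n from Or.inr (Or.inl rfl))
  have q3 := rel_one (show (a * b) ^ (2 ^ (n - 1)) * (c ^ (2 ^ (m - 1)))⁻¹ ∈ relsD m n from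
    Or.inr (Or.inr (Or.inl rfl)))
  have q4 := rel_one (show c ^ (2^m) ∈ relsD m n from Or.inr (Or.inr (Or.inr (Or.inl rfl))))
  have q5 := rel_one (show ⁅a, c⁆ ∈ relsD m n from
    Or.inr (Or.inr (Or.inr (Or.inr (Or.inl rfl)))))
  have q6 := rel_one (show ⁅b, c⁆ ∈ relsD m n from
    Or.inr (Or.inr (Or.inr (Or.inr (Or.inr rfl)))))
  simp only [a, b, c, map_pow, map_mul, map_inv, map_commutatorElement] at q1 q2 q3 q4 q5 q6
  refine build_iso m n 0 0 (2^(m-1)) hn (relsD m n) A B C hcard hgen hlift ?_ ?_ ?_ q4 ?_ ?_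
  · rw [pow_zero]; exact q1
  · rw [pow_zero]; exact q2
  · exact mul_inv_eq_one.mp q3
  · exact commutatorElement_eq_one_iff_commute.mp q5
  · exact commutatorElement_eq_one_iff_commute.mp q6

lemma glueQ {G : Type*} [Group G] [Finite G] (m n : ℕ) (hn : 1 ≤ n) (A B C : G)
    (hcard : Nat.card G = 2^(m+n)) (hgen : Subgroup.closure {A,B,C} = ⊤)
    (r1 : A^2 = C) (r2 : B^2 = C) (r3 : (A*B)^(2^(n-1)) = C^(2^(m-1)+2^(n-1)))
    (r4 : C^(2^m) = 1) (r5 : A*C=C*A) (r6 : B*C=C*B) :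
    Nonempty (G ≃* PresentedGroup (relsQ m n)) := by
  have hlift : ∀ r ∈ relsQ m n, FreeGroup.lift (fun i => ![A,B,C] i) r = 1 := by
    intro r hr
    simp only [relsQ, Set.mem_insert_iff, Set.mem_singleton_iff] at hr
    rcases hr with rfl|rfl|rfl|rfl|rfl|rfl <;>
      simp only [a, b, c, map_pow, map_mul, map_inv, map_commutatorElement,
        FreeGroup.lift_apply_of, Matrix.cons_val_zero, Matrix.cons_val_one, Matrix.head_cons,
        Matrix.cons_val_two, Matrix.tail_cons]
    · rw [r1, mul_inv_cancel]
    · rw [r2, mul_inv_cancel]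
    · rw [r3, mul_inv_cancel]
    · exact r4
    · exact commutatorElement_eq_one_iff_commute.mpr r5
    · exact commutatorElement_eq_one_iff_commute.mpr r6
  have q1 := rel_one (show a^2 * c⁻¹ ∈ relsQ m n from Or.inl rfl)
  have q2 := rel_one (show b^2 * c⁻¹ ∈ relsQ m n from Or.inr (Or.inl rfl))
  have q3 := rel_one (show (a * b) ^ (2 ^ (n - 1)) * (c ^ (2 ^ (m - 1) + 2 ^ (n-1)))⁻¹ ∈ relsQ m n
    from Or.inr (Or.inr (Or.inl rfl)))
  have q4 := rel_one (show c ^ (2^m) ∈ relsQ m n from Or.inr (Or.inr (Or.inr (Or.inl rfl))))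
  have q5 := rel_one (show ⁅a, c⁆ ∈ relsQ m n from
    Or.inr (Or.inr (Or.inr (Or.inr (Or.inl rfl)))))
  have q6 := rel_one (show ⁅b, c⁆ ∈ relsQ m n from
    Or.inr (Or.inr (Or.inr (Or.inr (Or.inr rfl)))))
  simp only [a, b, c, map_pow, map_mul, map_inv, map_commutatorElement] at q1 q2 q3 q4 q5 q6
  refine build_iso m n 1 1 (2^(m-1)+2^(n-1)) hn (relsQ m n) A B C hcard hgen hlift ?_ ?_ ?_ q4 ?_ ?_
  · rw [pow_one]; exact mul_inv_eq_one.mp q1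
  · rw [pow_one]; exact mul_inv_eq_one.mp q2
  · exact mul_inv_eq_one.mp q3
  · exact commutatorElement_eq_one_iff_commute.mp q5
  · exact commutatorElement_eq_one_iff_commute.mp q6

lemma glueS {G : Type*} [Group G] [Finite G] (m n : ℕ) (hn : 1 ≤ n) (A B C : G)
    (hcard : Nat.card G = 2^(m+n)) (hgen : Subgroup.closure {A,B,C} = ⊤)
    (r1 : A^2 = 1) (r2 : B^2 = C) (r3 : (A*B)^(2^(n-1)) = C^(2^(m-1)+2^(n-2)))
    (r4 : C^(2^m) = 1) (r5 : A*C=C*A) (r6 : B*C=C*B) :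
    Nonempty (G ≃* PresentedGroup (relsS m n)) := by
  have hlift : ∀ r ∈ relsS m n, FreeGroup.lift (fun i => ![A,B,C] i) r = 1 := by
    intro r hr
    simp only [relsS, Set.mem_insert_iff, Set.mem_singleton_iff] at hr
    rcases hr with rfl|rfl|rfl|rfl|rfl|rfl <;>
      simp only [a, b, c, map_pow, map_mul, map_inv, map_commutatorElement,
        FreeGroup.lift_apply_of, Matrix.cons_val_zero, Matrix.cons_val_one, Matrix.head_cons,
        Matrix.cons_val_two, Matrix.tail_cons]
    · exact r1
    · rw [r2, mul_inv_cancel]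
    · rw [r3, mul_inv_cancel]
    · exact r4
    · exact commutatorElement_eq_one_iff_commute.mpr r5
    · exact commutatorElement_eq_one_iff_commute.mpr r6
  have q1 := rel_one (show a^2 ∈ relsS m n from Or.inl rfl)
  have q2 := rel_one (show b^2 * c⁻¹ ∈ relsS m n from Or.inr (Or.inl rfl))
  have q3 := rel_one (show (a * b) ^ (2 ^ (n - 1)) * (c ^ (2 ^ (m - 1) + 2 ^ (n-2)))⁻¹ ∈ relsS m n
    from Or.inr (Or.inr (Or.inl rfl)))
  have q4 := rel_one (show c ^ (2^m) ∈ relsS m n from Or.inr (Or.inr (Or.inr (Or.inl rfl))))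
  have q5 := rel_one (show ⁅a, c⁆ ∈ relsS m n from
    Or.inr (Or.inr (Or.inr (Or.inr (Or.inl rfl)))))
  have q6 := rel_one (show ⁅b, c⁆ ∈ relsS m n from
    Or.inr (Or.inr (Or.inr (Or.inr (Or.inr rfl)))))
  simp only [a, b, c, map_pow, map_mul, map_inv, map_commutatorElement] at q1 q2 q3 q4 q5 q6
  refine build_iso m n 0 1 (2^(m-1)+2^(n-2)) hn (relsS m n) A B C hcard hgen hlift ?_ ?_ ?_ q4 ?_ ?_
  · rw [pow_zero]; exact q1
  · rw [pow_one]; exact mul_inv_eq_one.mp q2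
  · exact mul_inv_eq_one.mp q3
  · exact commutatorElement_eq_one_iff_commute.mp q5
  · exact commutatorElement_eq_one_iff_commute.mp q6
theorem trichotomy_cyclic_center_dihedral_quotient
    (G : Type) [Group G] [Finite G] (hG : IsPGroup 2 G) (m n : ℕ)
    (hm : 1 ≤ m) (hn : 2 ≤ n)
    (hcyc : IsCyclic (Subgroup.center G))
    (hZ : Nat.card ↥(Subgroup.center G) = 2 ^ m)
    (hq : Nat.card (G ⧸ Subgroup.center G) = 2 ^ n)
    (hdih : ∃ x y : G ⧸ Subgroup.center G,
        orderOf x = 2 ∧ orderOf y = 2 ∧ Subgroup.closure {x, y} = ⊤) :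
    Nonempty (G ≃* PresentedGroup (relsD m n)) ∨
      Nonempty (G ≃* PresentedGroup (relsQ m n)) ∨
        Nonempty (G ≃* PresentedGroup (relsS m n)) := by
  obtain ⟨g, hg⟩ := hcyc.exists_generator
  obtain ⟨x, y, hx, hy, hxy⟩ := hdih
  set C0 : G := (g : G) with hC0def
  have hC0mem : C0 ∈ Subgroup.center G := g.2
  have hC0ord : orderOf C0 = 2^m := by
    have h1 : orderOf g = 2^m := by
      rw [orderOf_eq_card_of_forall_mem_zpowers hg, hZ]
    rw [← h1]
    exact orderOf_injective (Subgroup.center G).subtype (Subgroup.subtype_injective _) g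
  have hC0gen : ∀ v ∈ Subgroup.center G, ∃ k : ℤ, v = C0^k := by
    intro v hv
    obtain ⟨k, hk⟩ := Subgroup.mem_zpowers_iff.mp (hg ⟨v, hv⟩)
    refine ⟨k, ?_⟩
    have h2 := congrArg (Subgroup.center G).subtype hk
    simp only [map_zpow] at h2
    exact h2.symm
  obtain ⟨A0, hA0⟩ := QuotientGroup.mk'_surjective (Subgroup.center G) x
  obtain ⟨B0, hB0⟩ := QuotientGroup.mk'_surjective (Subgroup.center G) y
  have hker : ∀ v : G, QuotientGroup.mk' (Subgroup.center G) v = 1 → v ∈ Subgroup.center G := by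
    intro v hv
    rwa [← QuotientGroup.ker_mk' (Subgroup.center G), MonoidHom.mem_ker]
  have hπmem : ∀ v : G, v ∈ Subgroup.center G →
      QuotientGroup.mk' (Subgroup.center G) v = 1 := by
    intro v hv
    rwa [← QuotientGroup.ker_mk' (Subgroup.center G), MonoidHom.mem_ker] at hv
  have hA0sq : A0^2 ∈ Subgroup.center G := by
    refine hker _ ?_
    rw [map_pow, hA0, ← hx]
    exact pow_orderOf_eq_one x
  have hB0sq : B0^2 ∈ Subgroup.center G := by
    refine hker _ ?_
    rw [map_pow, hB0, ← hy]
    exact pow_orderOf_eq_one y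
  obtain ⟨kz, hkz⟩ := hC0gen _ hA0sq
  obtain ⟨kw, hkw⟩ := hC0gen _ hB0sq
  have hcard : Nat.card G = 2^(m+n) := by
    rw [Subgroup.card_eq_card_quotient_mul_card_subgroup (Subgroup.center G), hq, hZ,
      ← pow_add]
    congr 1
    omega
  have hr4 : ∀ CC : G, orderOf CC = 2^m → CC^(2^m) = 1 := by
    intro CC h
    rw [← h]; exact pow_orderOf_eq_one CC
  have hadjπ : ∀ (W : G) (CC : G), CC ∈ Subgroup.center G → ∀ kk : ℤ,
      QuotientGroup.mk' (Subgroup.center G) (W * (CC^kk)⁻¹)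
        = QuotientGroup.mk' (Subgroup.center G) W := by
    intro W CC hCC kk
    rw [map_mul, hπmem _ ((Subgroup.center G).inv_mem (Subgroup.zpow_mem _ hCC kk)), mul_one]
  rcases Int.even_or_odd kz with ⟨k1, hk1⟩ | hkzodd
  · rcases Int.even_or_odd kw with ⟨k2, hk2⟩ | hkwodd
    · -- both squares are central squares : type D
      left
      set A : G := A0 * (C0^k1)⁻¹ with hAdef
      set B : G := B0 * (C0^k2)⁻¹ with hBdef
      have hAπ : QuotientGroup.mk' (Subgroup.center G) A = x := by
        rw [hAdef, hadjπ A0 C0 hC0mem k1, hA0]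
      have hBπ : QuotientGroup.mk' (Subgroup.center G) B = y := by
        rw [hBdef, hadjπ B0 C0 hC0mem k2, hB0]
      have r1 : A^2 = 1 := by
        rw [hAdef, adjust_sq A0 C0 hC0mem k1, hkz,
          show (2:ℤ)*k1 = kz from by omega, mul_inv_cancel]
      have r2 : B^2 = 1 := by
        rw [hBdef, adjust_sq B0 C0 hC0mem k2, hkw,
          show (2:ℤ)*k2 = kw from by omega, mul_inv_cancel]
      have r3 := case_core m n hm hn hq x y hx hy hxy C0 hC0mem hC0ord hC0gen A B hAπ hBπ 0 0
        (by rw [r1, pow_zero]) (by rw [r2, pow_zero])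
      rw [show 2^(m-1) + (0+0)*2^(n-2) = 2^(m-1) from by simp] at r3
      exact glueD m n (by omega) A B C0 hcard
        (gen_top x y hxy C0 hC0gen A B hAπ hBπ) r1 r2 r3 (hr4 C0 hC0ord)
        (Subgroup.mem_center_iff.mp hC0mem A) (Subgroup.mem_center_iff.mp hC0mem B)
    · -- kz even, kw odd : type S
      right; right
      obtain ⟨hCCmem, hCCord, hCCgen⟩ := odd_gen_package m C0 hC0mem hC0ord hC0gen kw hkwodd
      set CC : G := C0^kw with hCCdef
      obtain ⟨j, hj⟩ := hCCgen _ hA0sq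
      have hjeven : ¬ Odd j := by
        intro hodd
        have hoz := (parity_transfer m hm C0 hC0ord kw j kz hkwodd
          (by rw [← hj]; exact hkz)).mp hodd
        rcases hoz with ⟨cc, hcc⟩
        omega
      rw [Int.not_odd_iff_even] at hjeven
      obtain ⟨k3, hk3⟩ := hjeven
      set A : G := A0 * (CC^k3)⁻¹ with hAdef
      have hAπ : QuotientGroup.mk' (Subgroup.center G) A = x := by
        rw [hAdef, hadjπ A0 CC hCCmem k3, hA0]
      have r1 : A^2 = 1 := by
        rw [hAdef, adjust_sq A0 CC hCCmem k3, hj,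
          show (2:ℤ)*k3 = j from by omega, mul_inv_cancel]
      have r2 : B0^2 = CC := hkw
      have r3 := case_core m n hm hn hq x y hx hy hxy CC hCCmem hCCord hCCgen A B0 hAπ hB0 0 1
        (by rw [r1, pow_zero]) (by rw [pow_one]; exact r2)
      rw [show 2^(m-1) + (0+1)*2^(n-2) = 2^(m-1) + 2^(n-2) from by rw [zero_add, one_mul]] at r3
      exact glueS m n (by omega) A B0 CC hcard
        (gen_top x y hxy CC hCCgen A B0 hAπ hB0) r1 r2 r3 (hr4 CC hCCord)
        (Subgroup.mem_center_iff.mp hCCmem A) (Subgroup.mem_center_iff.mp hCCmem B0)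
  · rcases Int.even_or_odd kw with ⟨k2, hk2⟩ | hkwodd
    · -- kz odd, kw even : type S with roles swapped
      right; right
      obtain ⟨hCCmem, hCCord, hCCgen⟩ := odd_gen_package m C0 hC0mem hC0ord hC0gen kz hkzodd
      set CC : G := C0^kz with hCCdef
      have hyx : Subgroup.closure {y,x} = ⊤ := by rw [Set.pair_comm]; exact hxy
      obtain ⟨j, hj⟩ := hCCgen _ hB0sq
      have hjeven : ¬ Odd j := by
        intro hodd
        have hoz := (parity_transfer m hm C0 hC0ord kz j kw hkzodd
          (by rw [← hj]; exact hkw)).mp hodd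
        rcases hoz with ⟨cc, hcc⟩
        omega
      rw [Int.not_odd_iff_even] at hjeven
      obtain ⟨k3, hk3⟩ := hjeven
      set B : G := B0 * (CC^k3)⁻¹ with hBdef
      have hBπ : QuotientGroup.mk' (Subgroup.center G) B = y := by
        rw [hBdef, hadjπ B0 CC hCCmem k3, hB0]
      have r1 : B^2 = 1 := by
        rw [hBdef, adjust_sq B0 CC hCCmem k3, hj,
          show (2:ℤ)*k3 = j from by omega, mul_inv_cancel]
      have r2 : A0^2 = CC := hkz
      have r3 := case_core m n hm hn hq y x hy hx hyx CC hCCmem hCCord hCCgen B A0 hBπ hA0 0 1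
        (by rw [r1, pow_zero]) (by rw [pow_one]; exact r2)
      rw [show 2^(m-1) + (0+1)*2^(n-2) = 2^(m-1) + 2^(n-2) from by rw [zero_add, one_mul]] at r3
      exact glueS m n (by omega) B A0 CC hcard
        (gen_top y x hyx CC hCCgen B A0 hBπ hA0) r1 r2 r3 (hr4 CC hCCord)
        (Subgroup.mem_center_iff.mp hCCmem B) (Subgroup.mem_center_iff.mp hCCmem A0)
    · -- both odd : type Q
      right; left
      obtain ⟨hCCmem, hCCord, hCCgen⟩ := odd_gen_package m C0 hC0mem hC0ord hC0gen kz hkzodd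
      set CC : G := C0^kz with hCCdef
      obtain ⟨j, hj⟩ := hCCgen _ hB0sq
      have hjodd : Odd j :=
        (parity_transfer m hm C0 hC0ord kz j kw hkzodd (by rw [← hj]; exact hkw)).mpr hkwodd
      obtain ⟨k2, hk2⟩ := hjodd
      set B : G := B0 * (CC^k2)⁻¹ with hBdef
      have hBπ : QuotientGroup.mk' (Subgroup.center G) B = y := by
        rw [hBdef, hadjπ B0 CC hCCmem k2, hB0]
      have r2 : B^2 = CC := by
        rw [hBdef, adjust_sq B0 CC hCCmem k2, hj, ← zpow_sub,
          show j - 2*k2 = 1 from by omega, zpow_one]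
      have r1 : A0^2 = CC := hkz
      have r3 := case_core m n hm hn hq x y hx hy hxy CC hCCmem hCCord hCCgen A0 B hA0 hBπ 1 1
        (by rw [pow_one]; exact r1) (by rw [pow_one]; exact r2)
      rw [show 2^(m-1) + (1+1)*2^(n-2) = 2^(m-1) + 2^(n-1) from by
        rw [show (1:ℕ)+1 = 2 from rfl, ← pow_succ', show n-2+1 = n-1 from by omega]] at r3
      exact glueQ m n (by omega) A0 B CC hcard
        (gen_top x y hxy CC hCCgen A0 B hA0 hBπ) r1 r2 r3 (hr4 CC hCCord)
        (Subgroup.mem_center_iff.mp hCCmem A0) (Subgroup.mem_center_iff.mp hCCmem B)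

end MIP
end

section
/- For every m ≥ 1 the group S_{2^{m|2}} = ⟨a,b,c | a²=1, b²=c, (ab)² = c^{2^{m−1}+1}, c^{2^m}=[a,c]=[b,c]=1⟩ is isomorphic to D_{2^{1|2}} = ⟨a,b,c | a²=b²=1, (ab)²=c, c²=[a,c]=[b,c]=1⟩ if m = 1, and to Q_{2^{m|2}} = ⟨a,b,c | a²=c, b²=c, (ab)² = c^{2^{m−1}+2}, c^{2^m}=[a,c]=[b,c]=1⟩ if m > 1. -/
namespace MIP

open scoped commutatorElement

/-! ### Auxiliary lemmas -/

private lemma mk_rel {rels : Set (FreeGroup (Fin 3))} {r : FreeGroup (Fin 3)} (h : r ∈ rels) :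
    PresentedGroup.mk rels r = 1 :=
  (QuotientGroup.eq_one_iff _).mpr (Subgroup.subset_normalClosure h)

section Aux

variable {G : Type*} [Group G]

private lemma sq_mul_pow {x c : G} (h : Commute c x) (j : ℕ) :
    (x * c ^ j) ^ 2 = x ^ 2 * c ^ (2 * j) := by
  rw [((h.pow_left j).symm).mul_pow, ← pow_mul, mul_comm j 2]

private lemma word_eq {X Y C : G} (hY : Y ^ 2 = C) (hCY : Commute C Y) (j : ℕ) :
    X * Y * C ^ j * Y = X * C ^ (j + 1) := by
  rw [mul_assoc (X * Y), (hCY.pow_left j).eq, ← mul_assoc, mul_assoc X, ← sq, hY,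
    mul_assoc, ← pow_succ']

private lemma liftS (m : ℕ) (A B C : G) (h1 : A ^ 2 = 1) (h2 : B ^ 2 = C)
    (h3 : (A * B) ^ 2 = C ^ (2 ^ (m - 1) + 1)) (h4 : C ^ (2 ^ m) = 1)
    (h5 : Commute A C) (h6 : Commute B C) :
    ∀ r ∈ relsS m 2, FreeGroup.lift ![A, B, C] r = 1 := by
  intro r hr
  simp only [relsS, Set.mem_insert_iff, Set.mem_singleton_iff] at hr
  rcases hr with rfl | rfl | rfl | rfl | rfl | rfl
  · simpa [a] using h1
  · simp only [a, b, c, map_mul, map_pow, map_inv, FreeGroup.lift_apply_of]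
    simp [mul_inv_eq_one]
    exact h2
  · simp only [a, b, c, map_mul, map_pow, map_inv, FreeGroup.lift_apply_of]
    simp [mul_inv_eq_one]
    exact h3
  · simpa [c] using h4
  · simp only [a, c, map_commutatorElement, FreeGroup.lift_apply_of]
    simp [commutatorElement_eq_one_iff_commute]
    exact h5
  · simp only [b, c, map_commutatorElement, FreeGroup.lift_apply_of]
    simp [commutatorElement_eq_one_iff_commute]
    exact h6

private lemma liftD (m : ℕ) (A B C : G) (h1 : A ^ 2 = 1) (h2 : B ^ 2 = 1)
    (h3 : (A * B) ^ 2 = C ^ (2 ^ (m - 1))) (h4 : C ^ (2 ^ m) = 1)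
    (h5 : Commute A C) (h6 : Commute B C) :
    ∀ r ∈ relsD m 2, FreeGroup.lift ![A, B, C] r = 1 := by
  intro r hr
  simp only [relsD, Set.mem_insert_iff, Set.mem_singleton_iff] at hr
  rcases hr with rfl | rfl | rfl | rfl | rfl | rfl
  · simpa [a] using h1
  · simpa [b] using h2
  · simp only [a, b, c, map_mul, map_pow, map_inv, FreeGroup.lift_apply_of]
    simp [mul_inv_eq_one]
    exact h3
  · simpa [c] using h4
  · simp only [a, c, map_commutatorElement, FreeGroup.lift_apply_of]
    simp [commutatorElement_eq_one_iff_commute]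
    exact h5
  · simp only [b, c, map_commutatorElement, FreeGroup.lift_apply_of]
    simp [commutatorElement_eq_one_iff_commute]
    exact h6

private lemma liftQ (m : ℕ) (A B C : G) (h1 : A ^ 2 = C) (h2 : B ^ 2 = C)
    (h3 : (A * B) ^ 2 = C ^ (2 ^ (m - 1) + 2)) (h4 : C ^ (2 ^ m) = 1)
    (h5 : Commute A C) (h6 : Commute B C) :
    ∀ r ∈ relsQ m 2, FreeGroup.lift ![A, B, C] r = 1 := by
  intro r hr
  simp only [relsQ, Set.mem_insert_iff, Set.mem_singleton_iff] at hr
  rcases hr with rfl | rfl | rfl | rfl | rfl | rfl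
  · simp only [a, c, map_mul, map_pow, map_inv, FreeGroup.lift_apply_of]
    simp [mul_inv_eq_one]
    exact h1
  · simp only [b, c, map_mul, map_pow, map_inv, FreeGroup.lift_apply_of]
    simp [mul_inv_eq_one]
    exact h2
  · simp only [a, b, c, map_mul, map_pow, map_inv, FreeGroup.lift_apply_of]
    simp [mul_inv_eq_one]
    exact h3
  · simpa [c] using h4
  · simp only [a, c, map_commutatorElement, FreeGroup.lift_apply_of]
    simp [commutatorElement_eq_one_iff_commute]
    exact h5
  · simp only [b, c, map_commutatorElement, FreeGroup.lift_apply_of]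
    simp [commutatorElement_eq_one_iff_commute]
    exact h6

end Aux

/-! ### The defining relations hold in the presented groups -/

section RelLemmas

variable (m : ℕ)

private lemma S1 : (PresentedGroup.of 0 : PresentedGroup (relsS m 2)) ^ 2 = 1 := by
  simpa [a, map_pow, PresentedGroup.of] using mk_rel (show a ^ 2 ∈ relsS m 2 by simp [relsS])

private lemma S2 : (PresentedGroup.of 1 : PresentedGroup (relsS m 2)) ^ 2 =
    PresentedGroup.of 2 := by
  have := mk_rel (show b ^ 2 * c⁻¹ ∈ relsS m 2 by simp [relsS])
  simpa [b, c, map_mul, map_pow, map_inv, mul_inv_eq_one, PresentedGroup.of] using this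

private lemma S3 : ((PresentedGroup.of 0 : PresentedGroup (relsS m 2)) *
    PresentedGroup.of 1) ^ 2 = (PresentedGroup.of 2) ^ (2 ^ (m - 1) + 1) := by
  have := mk_rel
    (show (a * b) ^ (2 ^ (2 - 1)) * (c ^ (2 ^ (m - 1) + 2 ^ (2 - 2)))⁻¹ ∈ relsS m 2 by
      simp [relsS])
  simpa [a, b, c, map_mul, map_pow, map_inv, mul_inv_eq_one, PresentedGroup.of] using this

private lemma S4 : (PresentedGroup.of 2 : PresentedGroup (relsS m 2)) ^ (2 ^ m) = 1 := by
  simpa [c, map_pow, PresentedGroup.of] using mk_rel (show c ^ (2 ^ m) ∈ relsS m 2 by simp [relsS])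

private lemma S5 : Commute (PresentedGroup.of 0 : PresentedGroup (relsS m 2))
    (PresentedGroup.of 2) := by
  have := mk_rel (show ⁅a, c⁆ ∈ relsS m 2 by simp [relsS])
  rw [map_commutatorElement] at this
  exact commutatorElement_eq_one_iff_commute.mp this

private lemma S6 : Commute (PresentedGroup.of 1 : PresentedGroup (relsS m 2))
    (PresentedGroup.of 2) := by
  have := mk_rel (show ⁅b, c⁆ ∈ relsS m 2 by simp [relsS])
  rw [map_commutatorElement] at this
  exact commutatorElement_eq_one_iff_commute.mp this

private lemma D1 : (PresentedGroup.of 0 : PresentedGroup (relsD m 2)) ^ 2 = 1 := by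
  simpa [a, map_pow, PresentedGroup.of] using mk_rel (show a ^ 2 ∈ relsD m 2 by simp [relsD])

private lemma D2 : (PresentedGroup.of 1 : PresentedGroup (relsD m 2)) ^ 2 = 1 := by
  simpa [b, map_pow, PresentedGroup.of] using mk_rel (show b ^ 2 ∈ relsD m 2 by simp [relsD])

private lemma D3 : ((PresentedGroup.of 0 : PresentedGroup (relsD m 2)) *
    PresentedGroup.of 1) ^ 2 = (PresentedGroup.of 2) ^ (2 ^ (m - 1)) := by
  have := mk_rel
    (show (a * b) ^ (2 ^ (2 - 1)) * (c ^ (2 ^ (m - 1)))⁻¹ ∈ relsD m 2 by simp [relsD])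
  simpa [a, b, c, map_mul, map_pow, map_inv, mul_inv_eq_one, PresentedGroup.of] using this

private lemma D4 : (PresentedGroup.of 2 : PresentedGroup (relsD m 2)) ^ (2 ^ m) = 1 := by
  simpa [c, map_pow, PresentedGroup.of] using mk_rel (show c ^ (2 ^ m) ∈ relsD m 2 by simp [relsD])

private lemma D5 : Commute (PresentedGroup.of 0 : PresentedGroup (relsD m 2))
    (PresentedGroup.of 2) := by
  have := mk_rel (show ⁅a, c⁆ ∈ relsD m 2 by simp [relsD])
  rw [map_commutatorElement] at this
  exact commutatorElement_eq_one_iff_commute.mp this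

private lemma D6 : Commute (PresentedGroup.of 1 : PresentedGroup (relsD m 2))
    (PresentedGroup.of 2) := by
  have := mk_rel (show ⁅b, c⁆ ∈ relsD m 2 by simp [relsD])
  rw [map_commutatorElement] at this
  exact commutatorElement_eq_one_iff_commute.mp this

private lemma Q1 : (PresentedGroup.of 0 : PresentedGroup (relsQ m 2)) ^ 2 =
    PresentedGroup.of 2 := by
  have := mk_rel (show a ^ 2 * c⁻¹ ∈ relsQ m 2 by simp [relsQ])
  simpa [a, c, map_mul, map_pow, map_inv, mul_inv_eq_one, PresentedGroup.of] using this

private lemma Q2 : (PresentedGroup.of 1 : PresentedGroup (relsQ m 2)) ^ 2 =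
    PresentedGroup.of 2 := by
  have := mk_rel (show b ^ 2 * c⁻¹ ∈ relsQ m 2 by simp [relsQ])
  simpa [b, c, map_mul, map_pow, map_inv, mul_inv_eq_one, PresentedGroup.of] using this

private lemma Q3 : ((PresentedGroup.of 0 : PresentedGroup (relsQ m 2)) *
    PresentedGroup.of 1) ^ 2 = (PresentedGroup.of 2) ^ (2 ^ (m - 1) + 2) := by
  have := mk_rel
    (show (a * b) ^ (2 ^ (2 - 1)) * (c ^ (2 ^ (m - 1) + 2 ^ (2 - 1)))⁻¹ ∈ relsQ m 2 by
      simp [relsQ])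
  simpa [a, b, c, map_mul, map_pow, map_inv, mul_inv_eq_one, PresentedGroup.of] using this

private lemma Q4 : (PresentedGroup.of 2 : PresentedGroup (relsQ m 2)) ^ (2 ^ m) = 1 := by
  simpa [c, map_pow, PresentedGroup.of] using mk_rel (show c ^ (2 ^ m) ∈ relsQ m 2 by simp [relsQ])

private lemma Q5 : Commute (PresentedGroup.of 0 : PresentedGroup (relsQ m 2))
    (PresentedGroup.of 2) := by
  have := mk_rel (show ⁅a, c⁆ ∈ relsQ m 2 by simp [relsQ])
  rw [map_commutatorElement] at this
  exact commutatorElement_eq_one_iff_commute.mp this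

private lemma Q6 : Commute (PresentedGroup.of 1 : PresentedGroup (relsQ m 2))
    (PresentedGroup.of 2) := by
  have := mk_rel (show ⁅b, c⁆ ∈ relsQ m 2 by simp [relsQ])
  rw [map_commutatorElement] at this
  exact commutatorElement_eq_one_iff_commute.mp this

end RelLemmas

/-! ### The case `m = 1` -/

private def phiSD : PresentedGroup (relsS 1 2) →* PresentedGroup (relsD 1 2) :=
  PresentedGroup.toGroup (liftS 1 (PresentedGroup.of 0)
    (PresentedGroup.of 0 * PresentedGroup.of 1) (PresentedGroup.of 2)
    (D1 1) (by simpa using D3 1)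
    (by
      rw [← mul_assoc, ← sq, D1 1, one_mul, D2 1]
      have h4 : (PresentedGroup.of 2 : PresentedGroup (relsD 1 2)) ^ 2 = 1 := by
        simpa using D4 1
      simpa using h4.symm)
    (by simpa using D4 1) (D5 1) ((D5 1).mul_left (D6 1)))

private def psiDS : PresentedGroup (relsD 1 2) →* PresentedGroup (relsS 1 2) :=
  PresentedGroup.toGroup (liftD 1 (PresentedGroup.of 0)
    (PresentedGroup.of 0 * PresentedGroup.of 1) (PresentedGroup.of 2)
    (S1 1)
    (by
      have h3 : ((PresentedGroup.of 0 : PresentedGroup (relsS 1 2)) *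
          PresentedGroup.of 1) ^ 2 = (PresentedGroup.of 2) ^ 2 := by simpa using S3 1
      have h4 : (PresentedGroup.of 2 : PresentedGroup (relsS 1 2)) ^ 2 = 1 := by
        simpa using S4 1
      rw [h3, h4])
    (by
      rw [← mul_assoc, ← sq, S1 1, one_mul, S2 1]
      simp)
    (by simpa using S4 1) (S5 1) ((S5 1).mul_left (S6 1)))

private def equivSD : PresentedGroup (relsS 1 2) ≃* PresentedGroup (relsD 1 2) :=
  MonoidHom.toMulEquiv phiSD psiDS
    (by
      ext x
      fin_cases x <;>
        simp [phiSD, psiDS, PresentedGroup.toGroup.of, map_mul] <;>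
        rw [← mul_assoc, ← sq, S1 1, one_mul])
    (by
      ext x
      fin_cases x <;>
        simp [phiSD, psiDS, PresentedGroup.toGroup.of, map_mul] <;>
        rw [← mul_assoc, ← sq, D1 1, one_mul])

/-! ### The case `m > 1` -/

private lemma one_le_two_pow (k : ℕ) : 1 ≤ 2 ^ k := Nat.one_le_two_pow

private lemma pow_k1 (k : ℕ) : (2 : ℕ) ^ (k + 1) = 2 * 2 ^ k := by ring

private lemma pow_k2 (k : ℕ) : (2 : ℕ) ^ (k + 2) = 4 * 2 ^ k := by ring

private def phiSQ (k : ℕ) :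
    PresentedGroup (relsS (k + 2) 2) →* PresentedGroup (relsQ (k + 2) 2) :=
  PresentedGroup.toGroup (liftS (k + 2)
    (PresentedGroup.of 0 * PresentedGroup.of 1 * PresentedGroup.of 2 ^ (2 ^ k - 1))
    (PresentedGroup.of 1) (PresentedGroup.of 2)
    (by
      rw [sq_mul_pow (((Q5 (k + 2)).symm).mul_right ((Q6 (k + 2)).symm)), Q3 (k + 2),
        ← pow_add]
      have h := one_le_two_pow k
      rw [show 2 ^ (k + 2 - 1) + 2 + 2 * (2 ^ k - 1) = 2 ^ (k + 2) by
        simp only [show k + 2 - 1 = k + 1 from rfl, pow_k1, pow_k2]; omega]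
      exact Q4 (k + 2))
    (Q2 (k + 2))
    (by
      rw [word_eq (Q2 (k + 2)) ((Q6 (k + 2)).symm)]
      have h := one_le_two_pow k
      rw [show 2 ^ k - 1 + 1 = 2 ^ k by omega]
      rw [sq_mul_pow ((Q5 (k + 2)).symm), Q1 (k + 2), ← pow_succ']
      rw [show 2 * 2 ^ k + 1 = 2 ^ (k + 2 - 1) + 1 by
        simp only [show k + 2 - 1 = k + 1 from rfl, pow_k1]])
    (Q4 (k + 2))
    (((Q5 (k + 2)).mul_left (Q6 (k + 2))).mul_left ((Commute.refl _).pow_left _))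
    (Q6 (k + 2)))

private def psiQS (k : ℕ) :
    PresentedGroup (relsQ (k + 2) 2) →* PresentedGroup (relsS (k + 2) 2) :=
  PresentedGroup.toGroup (liftQ (k + 2)
    (PresentedGroup.of 0 * PresentedGroup.of 1 * PresentedGroup.of 2 ^ (3 * 2 ^ k))
    (PresentedGroup.of 1) (PresentedGroup.of 2)
    (by
      rw [sq_mul_pow (((S5 (k + 2)).symm).mul_right ((S6 (k + 2)).symm)), S3 (k + 2),
        ← pow_add]
      rw [show 2 ^ (k + 2 - 1) + 1 + 2 * (3 * 2 ^ k) = 2 ^ (k + 2) * 2 + 1 by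
        simp only [show k + 2 - 1 = k + 1 from rfl, pow_k1, pow_k2]; omega]
      rw [pow_succ, pow_mul, S4 (k + 2), one_pow, one_mul])
    (S2 (k + 2))
    (by
      rw [word_eq (S2 (k + 2)) ((S6 (k + 2)).symm)]
      rw [sq_mul_pow ((S5 (k + 2)).symm), S1 (k + 2), one_mul]
      rw [show 2 * (3 * 2 ^ k + 1) = (2 ^ (k + 2 - 1) + 2) + 2 ^ (k + 2) by
        simp only [show k + 2 - 1 = k + 1 from rfl, pow_k1, pow_k2]; omega]
      rw [pow_add, S4 (k + 2), mul_one])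
    (S4 (k + 2))
    (((S5 (k + 2)).mul_left (S6 (k + 2))).mul_left ((Commute.refl _).pow_left _))
    (S6 (k + 2)))

private def equivSQ (k : ℕ) :
    PresentedGroup (relsS (k + 2) 2) ≃* PresentedGroup (relsQ (k + 2) 2) :=
  MonoidHom.toMulEquiv (phiSQ k) (psiQS k)
    (by
      ext x
      have h := one_le_two_pow k
      fin_cases x <;>
        simp [phiSQ, psiQS, PresentedGroup.toGroup.of, map_mul, map_pow]
      rw [word_eq (S2 (k + 2)) ((S6 (k + 2)).symm), mul_assoc, ← pow_add]
      rw [show 3 * 2 ^ k + 1 + (2 ^ k - 1) = 2 ^ (k + 2) by simp only [pow_k2]; omega]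
      rw [S4 (k + 2), mul_one])
    (by
      ext x
      have h := one_le_two_pow k
      fin_cases x <;>
        simp [phiSQ, psiQS, PresentedGroup.toGroup.of, map_mul, map_pow]
      rw [word_eq (Q2 (k + 2)) ((Q6 (k + 2)).symm), mul_assoc, ← pow_add]
      rw [show 2 ^ k - 1 + 1 + 3 * 2 ^ k = 2 ^ (k + 2) by simp only [pow_k2]; omega]
      rw [Q4 (k + 2), mul_one])

theorem exceptional_isomorphisms_n_two (m : ℕ) (hm : 1 ≤ m) :
    (m = 1 → Nonempty (PresentedGroup (relsS m 2) ≃* PresentedGroup (relsD 1 2))) ∧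
      (1 < m → Nonempty (PresentedGroup (relsS m 2) ≃* PresentedGroup (relsQ m 2))) := by
  constructor
  · rintro rfl
    exact ⟨equivSD⟩
  · intro h
    obtain ⟨k, rfl⟩ : ∃ k, m = k + 2 := ⟨m - 2, by omega⟩
    exact ⟨equivSQ k⟩

end MIP
end
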